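/- Let L₁, L₂: N₁ → T*∂M be two homogeneous-of-degree-1, invertible symplectomorphisms from a conic open set N₁ ⊆ T*∂M, inducing the same map on the spherical bundle (i.e., L₂(x,ξ) ∈ ℝ₊ · L₁(x,ξ) for all (x,ξ)). Write L₂(x,ξ) = (y, φ(x,ξ)η) when L₁(x,ξ) = (y, η) with φ: N₁ → ℝ₊ homogeneous of degree 0. Then the composition T = L₁^{-1} ∘ L₂ has the form T(x,ξ) = (x, φ(x,ξ)ξ), and T being a symplectomorphism together with homogeneity of degree 0 of φ forces φ ≡ 1, so L₁ = L₂. -/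

import Mathlib

/-- The standard symplectic form `Σ dξ_j ∧ dx^j` on `T*ℝ^m ≅ ℝ^m × ℝ^m`,
evaluated on tangent vectors `v = (δx, δξ)`, `w`. -/
def symplForm (m : ℕ) (v w : (Fin m → ℝ) × (Fin m → ℝ)) : ℝ :=
  (∑ i, v.2 i * w.1 i) - (∑ i, w.2 i * v.1 i)

lemma symplForm_nondeg (m : ℕ) (v : (Fin m → ℝ) × (Fin m → ℝ))
    (h : ∀ w, symplForm m v w = 0) : v = 0 := by
  have h0 := h (v.2, fun i => -(v.1 i))
  simp only [symplForm, neg_mul, Finset.sum_neg_distrib, sub_neg_eq_add] at h0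
  have hn1 : (0:ℝ) ≤ ∑ i, v.1 i * v.1 i :=
    Finset.sum_nonneg fun i _ => mul_self_nonneg _
  have hn2 : (0:ℝ) ≤ ∑ i, v.2 i * v.2 i :=
    Finset.sum_nonneg fun i _ => mul_self_nonneg _
  have h1 : ∑ i, v.1 i * v.1 i = 0 := by linarith
  have h2 : ∑ i, v.2 i * v.2 i = 0 := by linarith
  have e1 := (Finset.sum_eq_zero_iff_of_nonneg
    (fun i (_ : i ∈ Finset.univ) => mul_self_nonneg (v.1 i))).mp h1
  have e2 := (Finset.sum_eq_zero_iff_of_nonneg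
    (fun i (_ : i ∈ Finset.univ) => mul_self_nonneg (v.2 i))).mp h2
  have : v.1 = 0 ∧ v.2 = 0 := by
    constructor <;> funext i
    · exact mul_self_eq_zero.mp (e1 i (Finset.mem_univ i))
    · exact mul_self_eq_zero.mp (e2 i (Finset.mem_univ i))
  exact Prod.ext this.1 this.2

lemma euler (m : ℕ) (N₁ : Set ((Fin m → ℝ) × (Fin m → ℝ)))
    (L : ((Fin m → ℝ) × (Fin m → ℝ)) → ((Fin m → ℝ) × (Fin m → ℝ)))
    (hd : ∀ z ∈ N₁, DifferentiableAt ℝ L z)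
    (hhom : ∀ t : ℝ, 0 < t → ∀ z ∈ N₁,
      L (z.1, t • z.2) = ((L z).1, t • (L z).2))
    (z : (Fin m → ℝ) × (Fin m → ℝ)) (hz : z ∈ N₁) :
    fderiv ℝ L z ((0 : Fin m → ℝ), z.2) = ((0 : Fin m → ℝ), (L z).2) := by
  have hA : HasFDerivAt L (fderiv ℝ L z) z := (hd z hz).hasFDerivAt
  have hsm : ∀ c : Fin m → ℝ, HasDerivAt (fun t : ℝ => t • c) c 1 := by
    intro c
    simpa using (hasDerivAt_id (1:ℝ)).smul_const c
  have hg : HasDerivAt (fun t : ℝ => (z.1, t • z.2)) (((0 : Fin m → ℝ), z.2)) 1 :=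
    HasDerivAt.prodMk (hasDerivAt_const (1:ℝ) z.1) (hsm z.2)
  have hA' : HasFDerivAt L (fderiv ℝ L z) (z.1, (1:ℝ) • z.2) := by
    simpa using hA
  have hcomp : HasDerivAt (fun t : ℝ => L (z.1, t • z.2))
      (fderiv ℝ L z ((0 : Fin m → ℝ), z.2)) 1 :=
    hA'.comp_hasDerivAt 1 hg
  have hrhs : HasDerivAt (fun t : ℝ => ((L z).1, t • (L z).2))
      (((0 : Fin m → ℝ), (L z).2)) 1 :=
    HasDerivAt.prodMk (hasDerivAt_const (1:ℝ) (L z).1) (hsm (L z).2)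
  have heq : (fun t : ℝ => L (z.1, t • z.2)) =ᶠ[nhds (1:ℝ)]
      (fun t : ℝ => ((L z).1, t • (L z).2)) := by
    filter_upwards [Ioi_mem_nhds (zero_lt_one)] with t ht
    exact hhom t ht z hz
  have hcomp' : HasDerivAt (fun t : ℝ => L (z.1, t • z.2))
      (((0 : Fin m → ℝ), (L z).2)) 1 := hrhs.congr_of_eventuallyEq heq
  exact hcomp.unique hcomp'

/-- Lemma 5.2: two invertible, positively homogeneous of degree 1
symplectomorphisms `L₁, L₂` on a conic open set `N₁ ⊆ T*∂M` (with nonvanishing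
fiber components) inducing the same map on the spherical bundle — i.e.
`L₂(x,ξ) = (y, φ(x,ξ) η)` whenever `L₁(x,ξ) = (y, η)`, with `φ > 0`
homogeneous of degree 0 — coincide: the rescaling `φ` is forced to be `≡ 1`,
so `L₁ = L₂` on `N₁`. -/
theorem stmt_19 (m : ℕ) (N₁ : Set ((Fin m → ℝ) × (Fin m → ℝ)))
    (hopen : IsOpen N₁)
    (hcone : ∀ t : ℝ, 0 < t → ∀ z ∈ N₁, (z.1, t • z.2) ∈ N₁)
    (L₁ L₂ : ((Fin m → ℝ) × (Fin m → ℝ)) → ((Fin m → ℝ) × (Fin m → ℝ)))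
    (hd1 : ∀ z ∈ N₁, DifferentiableAt ℝ L₁ z)
    (hd2 : ∀ z ∈ N₁, DifferentiableAt ℝ L₂ z)
    (hhom1 : ∀ t : ℝ, 0 < t → ∀ z ∈ N₁,
      L₁ (z.1, t • z.2) = ((L₁ z).1, t • (L₁ z).2))
    (hhom2 : ∀ t : ℝ, 0 < t → ∀ z ∈ N₁,
      L₂ (z.1, t • z.2) = ((L₂ z).1, t • (L₂ z).2))
    (hsymp1 : ∀ z ∈ N₁, ∀ v w,
      symplForm m (fderiv ℝ L₁ z v) (fderiv ℝ L₁ z w) = symplForm m v w)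
    (hsymp2 : ∀ z ∈ N₁, ∀ v w,
      symplForm m (fderiv ℝ L₂ z v) (fderiv ℝ L₂ z w) = symplForm m v w)
    (hinj1 : Set.InjOn L₁ N₁) (hinj2 : Set.InjOn L₂ N₁)
    (hnz : ∀ z ∈ N₁, (L₁ z).2 ≠ 0)
    (hsph : ∀ z ∈ N₁, ∃ t : ℝ, 0 < t ∧ L₂ z = ((L₁ z).1, t • (L₁ z).2)) :
    ∀ z ∈ N₁, L₂ z = L₁ z := by
  intro z hz
  obtain ⟨t, ht, hL⟩ := hsph z hz
  set η := (L₁ z).2 with hη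
  set A := fderiv ℝ L₁ z with hA
  set B := fderiv ℝ L₂ z with hB
  -- Euler / homogeneity: radial vector field is preserved
  have he1 : A ((0 : Fin m → ℝ), z.2) = ((0 : Fin m → ℝ), η) :=
    euler m N₁ L₁ hd1 hhom1 z hz
  have he2 : B ((0 : Fin m → ℝ), z.2) = ((0 : Fin m → ℝ), (L₂ z).2) :=
    euler m N₁ L₂ hd2 hhom2 z hz
  -- first components of the two derivatives agree
  have hfst : ∀ v, (B v).1 = (A v).1 := by
    have h1 : HasFDerivAt (fun w => (L₁ w).1)
        ((ContinuousLinearMap.fst ℝ (Fin m → ℝ) (Fin m → ℝ)).comp A) z :=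
      (hd1 z hz).hasFDerivAt.fst
    have h2 : HasFDerivAt (fun w => (L₂ w).1)
        ((ContinuousLinearMap.fst ℝ (Fin m → ℝ) (Fin m → ℝ)).comp B) z :=
      (hd2 z hz).hasFDerivAt.fst
    have heq : (fun w => (L₁ w).1) =ᶠ[nhds z] (fun w => (L₂ w).1) := by
      filter_upwards [hopen.mem_nhds hz] with w hw
      obtain ⟨s, hs, hLs⟩ := hsph w hw
      rw [hLs]
    have h2' : HasFDerivAt (fun w => (L₁ w).1)
        ((ContinuousLinearMap.fst ℝ (Fin m → ℝ) (Fin m → ℝ)).comp B) z :=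
      h2.congr_of_eventuallyEq heq
    have := h2'.unique h1
    intro v
    have hv := DFunLike.congr_fun this v
    simpa using hv
  -- alpha-form preservation for L₁
  have ha1 : ∀ v, ∑ i, η i * (A v).1 i = ∑ i, z.2 i * v.1 i := by
    intro v
    have h := hsymp1 z hz ((0 : Fin m → ℝ), z.2) v
    rw [he1] at h
    simpa [symplForm] using h
  -- alpha-form preservation for L₂
  have ha2 : ∀ v, t * ∑ i, η i * (A v).1 i = ∑ i, z.2 i * v.1 i := by
    intro v
    have h := hsymp2 z hz ((0 : Fin m → ℝ), z.2) v
    rw [he2, hL] at h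
    simp only [symplForm, Prod.snd, Prod.fst] at h
    rw [hfst v] at h
    simp only [Pi.smul_apply, smul_eq_mul, mul_assoc] at h
    rw [← Finset.mul_sum] at h
    simpa using h
  -- A is surjective
  have hAinj : Function.Injective A := by
    intro v w hvw
    have hz0 : A (v - w) = 0 := by rw [map_sub, hvw, sub_self]
    have h0 : v - w = 0 := by
      apply symplForm_nondeg m
      intro u
      have h := hsymp1 z hz (v - w) u
      rw [hz0] at h
      rw [← h]
      simp [symplForm]
    exact sub_eq_zero.mp h0
  have hAsurj : Function.Surjective A := by
    have hinj' : Function.Injective (A : ((Fin m → ℝ) × (Fin m → ℝ)) →ₗ[ℝ]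
        ((Fin m → ℝ) × (Fin m → ℝ))) := hAinj
    exact LinearMap.injective_iff_surjective.mp hinj'
  -- choose v with (A v).1 = η
  obtain ⟨v, hv⟩ := hAsurj (η, (0 : Fin m → ℝ))
  have hv1 : (A v).1 = η := by rw [hv]
  have key : t * ∑ i, η i * η i = ∑ i, η i * η i := by
    have e1 := ha1 v
    have e2 := ha2 v
    rw [hv1] at e1 e2
    linarith
  have hpos : 0 < ∑ i, η i * η i := by
    rcases Function.ne_iff.mp (hnz z hz) with ⟨i, hi⟩
    apply Finset.sum_pos' (fun j _ => mul_self_nonneg _)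
    exact ⟨i, Finset.mem_univ i, mul_self_pos.mpr hi⟩
  have ht1 : t = 1 := by
    have := mul_right_cancel₀ (ne_of_gt hpos) (by linarith [key] : t * ∑ i, η i * η i = 1 * ∑ i, η i * η i)
    exact this
  rw [hL, ht1, one_smul]
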